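/- Let l, m, n, t be natural numbers, π a set partition of Fin l ⊕ Fin m and ρ a set partition of Fin m ⊕ Fin n. Regard Fin l ⊕ Fin m ⊕ Fin n; let π̃ be the set partition of this set obtained from π (placed on the first two summands) by adding each element of Fin n as a singleton block, and ρ̃ the one obtained from ρ (placed on the last two summands) by adding each element of Fin l as a singleton block. Let σ = π̃ ∨ ρ̃ be their join (finest common coarsening) in the lattice of set partitions, let c be the number of blocks of σ contained entirely in the middle summand Fin m, and let π∘ρ be the set partition of Fin l ⊕ Fin n whose blocks are the nonempty intersections of the blocks of σ with Fin l ⊕ Fin n. Then the composite of the partition operators satisfies T_π ∘ T_ρ = t^c · T_{π∘ρ} as k-linear maps U_t^{⊗n} → U_t^{⊗l}, where t^c is taken in k via the canonical map ℕ → k. (This is the composition rule making the assignment π ↦ T_π a k-linear functor from the combinatorially defined partition category to representations of S_t.) -/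

import Mathlib

open scoped Classical

noncomputable section

/-- The partition operator `T_π : U_t^{⊗n} → U_t^{⊗m}` attached to a set partition `π` of
`Fin m ⊕ Fin n` (encoded as an equivalence relation, i.e. a `Setoid`). -/
def partitionMap (k : Type*) [Field k] (t m n : ℕ) (π : Setoid (Fin m ⊕ Fin n)) :
    ((Fin n → Fin t) → k) →ₗ[k] ((Fin m → Fin t) → k) :=
  Matrix.mulVecLin (Matrix.of fun (J : Fin m → Fin t) (I : Fin n → Fin t) =>
    if ∀ x y : Fin m ⊕ Fin n, π.r x y → Sum.elim J I x = Sum.elim J I y then (1 : k) else 0)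

/-- The disjoint union of two set partitions. -/
def sumSetoid {α β : Type*} (s : Setoid α) (u : Setoid β) : Setoid (α ⊕ β) :=
  Setoid.ker (Sum.map (Quotient.mk s) (Quotient.mk u))

/-- `π̃`: the set partition of `Fin l ⊕ Fin m ⊕ Fin n` obtained from `π` (placed on the first
two summands) by adding each element of `Fin n` as a singleton block. -/
def tildePi (l m n : ℕ) (π : Setoid (Fin l ⊕ Fin m)) : Setoid (Fin l ⊕ (Fin m ⊕ Fin n)) :=
  Setoid.comap (⇑(Equiv.sumAssoc (Fin l) (Fin m) (Fin n)).symm)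
    (sumSetoid π (Setoid.ker (id : Fin n → Fin n)))

/-- `ρ̃`: the set partition of `Fin l ⊕ Fin m ⊕ Fin n` obtained from `ρ` (placed on the last
two summands) by adding each element of `Fin l` as a singleton block. -/
def tildeRho (l m n : ℕ) (ρ : Setoid (Fin m ⊕ Fin n)) : Setoid (Fin l ⊕ (Fin m ⊕ Fin n)) :=
  sumSetoid (Setoid.ker (id : Fin l → Fin l)) ρ

/-- `σ = π̃ ⊔ ρ̃`, the join (finest common coarsening) in the lattice of set partitions. -/
def joinSetoid (l m n : ℕ) (π : Setoid (Fin l ⊕ Fin m)) (ρ : Setoid (Fin m ⊕ Fin n)) :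
    Setoid (Fin l ⊕ (Fin m ⊕ Fin n)) :=
  tildePi l m n π ⊔ tildeRho l m n ρ

/-- `c`: the number of blocks of `σ = π̃ ⊔ ρ̃` contained entirely in the middle summand. -/
def middleBlocks (l m n : ℕ) (π : Setoid (Fin l ⊕ Fin m)) (ρ : Setoid (Fin m ⊕ Fin n)) : ℕ :=
  {B | B ∈ (joinSetoid l m n π ρ).classes ∧
    B ⊆ Set.range fun x : Fin m => (Sum.inr (Sum.inl x) : Fin l ⊕ (Fin m ⊕ Fin n))}.ncard

/-- `π ∘ ρ`: the set partition of `Fin l ⊕ Fin n` whose blocks are the nonempty intersections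
of the blocks of `σ = π̃ ⊔ ρ̃` with `Fin l ⊕ Fin n`. -/
def compSetoid (l m n : ℕ) (π : Setoid (Fin l ⊕ Fin m)) (ρ : Setoid (Fin m ⊕ Fin n)) :
    Setoid (Fin l ⊕ Fin n) :=
  Setoid.comap (Sum.map (id : Fin l → Fin l) (Sum.inr : Fin n → Fin m ⊕ Fin n))
    (joinSetoid l m n π ρ)


section AuxLemmas

lemma sumSetoid_le_ker_elim {α β γ : Type*} (s : Setoid α) (u : Setoid β)
    (f : α → γ) (g : β → γ) :
    sumSetoid s u ≤ Setoid.ker (Sum.elim f g) ↔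
      (s ≤ Setoid.ker f) ∧ (u ≤ Setoid.ker g) := by
  constructor
  · intro h
    constructor
    · intro a b hab
      have := h (x := Sum.inl a) (y := Sum.inl b)
        (by rw [sumSetoid, Setoid.ker_def]; simp [Quotient.sound hab])
      simpa [Setoid.ker, Function.onFun] using this
    · intro a b hab
      have := h (x := Sum.inr a) (y := Sum.inr b)
        (by rw [sumSetoid, Setoid.ker_def]; simp [Quotient.sound hab])
      simpa [Setoid.ker, Function.onFun] using this
  · rintro ⟨h1, h2⟩ x y hxy
    rw [sumSetoid, Setoid.ker_def] at hxy
    rcases x with a | a <;> rcases y with b | b <;>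
      simp [sumSetoid, Setoid.ker, Function.onFun] at hxy ⊢
    · exact h1 (Quotient.exact hxy)
    · exact h2 (Quotient.exact hxy)

lemma comap_equiv_le_ker {α β γ : Type*} (e : α ≃ β) (S : Setoid α) (F : β → γ) :
    Setoid.comap (⇑e.symm) S ≤ Setoid.ker F ↔ S ≤ Setoid.ker (F ∘ ⇑e) := by
  constructor
  · intro h a b hab
    have := h (x := e a) (y := e b) (by simpa [Setoid.comap_rel, Function.onFun] using hab)
    simpa [Setoid.ker, Function.onFun] using this
  · intro h x y hxy
    have := h (x := e.symm x) (y := e.symm y) hxy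
    simpa [Setoid.ker, Function.onFun] using this

lemma ker_id_le {α γ : Type*} (f : α → γ) : Setoid.ker (id : α → α) ≤ Setoid.ker f := by
  intro x y hxy
  have : x = y := hxy
  simp [Setoid.ker, Function.onFun, this]

lemma le_ker_iff {α γ : Type*} (S : Setoid α) (F : α → γ) :
    S ≤ Setoid.ker F ↔ ∀ x y, S.r x y → F x = F y := by
  constructor
  · intro h x y hxy; exact h hxy
  · intro h x y hxy; exact h x y hxy

lemma respects_iff {l m n t : ℕ} (π : Setoid (Fin l ⊕ Fin m)) (ρ : Setoid (Fin m ⊕ Fin n))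
    (J : Fin l → Fin t) (K : Fin m → Fin t) (I : Fin n → Fin t) :
    ((∀ x y, π.r x y → Sum.elim J K x = Sum.elim J K y) ∧
     (∀ x y, ρ.r x y → Sum.elim K I x = Sum.elim K I y)) ↔
    (∀ x y, (joinSetoid l m n π ρ).r x y →
      Sum.elim J (Sum.elim K I) x = Sum.elim J (Sum.elim K I) y) := by
  have h1 : tildePi l m n π ≤ Setoid.ker (Sum.elim J (Sum.elim K I)) ↔
      π ≤ Setoid.ker (Sum.elim J K) := by
    rw [tildePi, comap_equiv_le_ker]
    have : (Sum.elim J (Sum.elim K I)) ∘ ⇑(Equiv.sumAssoc (Fin l) (Fin m) (Fin n)) =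
        Sum.elim (Sum.elim J K) I := by
      funext x; rcases x with (a | a) | a <;> simp
    rw [this, sumSetoid_le_ker_elim]
    exact and_iff_left (ker_id_le I)
  have h2 : tildeRho l m n ρ ≤ Setoid.ker (Sum.elim J (Sum.elim K I)) ↔
      ρ ≤ Setoid.ker (Sum.elim K I) := by
    rw [tildeRho, sumSetoid_le_ker_elim]
    exact and_iff_right (ker_id_le J)
  rw [joinSetoid]
  conv_rhs => rw [← le_ker_iff]
  rw [sup_le_iff, h1, h2, le_ker_iff, le_ker_iff]

lemma key_count {l m n t : ℕ} (σ : Setoid (Fin l ⊕ (Fin m ⊕ Fin n)))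
    (J : Fin l → Fin t) (I : Fin n → Fin t) :
    Nat.card {K : Fin m → Fin t // ∀ x y, σ.r x y →
        Sum.elim J (Sum.elim K I) x = Sum.elim J (Sum.elim K I) y}
      = if (∀ x y : Fin l ⊕ Fin n,
            σ.r (Sum.map id Sum.inr x) (Sum.map id Sum.inr y) → Sum.elim J I x = Sum.elim J I y)
        then t ^ {B | B ∈ σ.classes ∧
            B ⊆ Set.range fun x : Fin m => (Sum.inr (Sum.inl x) : Fin l ⊕ (Fin m ⊕ Fin n))}.ncard
        else 0 := by
  set ι : Fin l ⊕ Fin n → Fin l ⊕ (Fin m ⊕ Fin n) := Sum.map id Sum.inr with hι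
  set g : Fin l ⊕ Fin n → Fin t := Sum.elim J I with hg
  have hFι : ∀ (K : Fin m → Fin t) (x : Fin l ⊕ Fin n),
      Sum.elim J (Sum.elim K I) (ι x) = g x := by
    intro K x; rcases x with a | a <;> simp [hι, hg]
  split_ifs with hc
  · -- compatible case
    set S : Set (Quotient σ) := Set.range (fun x : Fin l ⊕ Fin n => Quotient.mk σ (ι x)) with hS
    have e1 : {K : Fin m → Fin t // ∀ x y, σ.r x y →
          Sum.elim J (Sum.elim K I) x = Sum.elim J (Sum.elim K I) y}
        ≃ {h : Quotient σ → Fin t // ∀ x : Fin l ⊕ Fin n, h (Quotient.mk σ (ι x)) = g x} :=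
    { toFun := fun K => ⟨Quotient.lift (Sum.elim J (Sum.elim K.1 I)) (fun a b hab => K.2 a b hab),
        fun x => hFι K.1 x⟩
      invFun := fun h => ⟨fun b => h.1 (Quotient.mk σ (Sum.inr (Sum.inl b))), by
        intro x y hxy
        have key : ∀ z : Fin l ⊕ (Fin m ⊕ Fin n),
            Sum.elim J (Sum.elim (fun b => h.1 (Quotient.mk σ (Sum.inr (Sum.inl b)))) I) z
              = h.1 (Quotient.mk σ z) := by
          intro z
          rcases z with a | (a | a)
          exacts [(h.2 (Sum.inl a)).symm, rfl, (h.2 (Sum.inr a)).symm]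
        rw [key, key, Quotient.sound hxy]⟩
      left_inv := fun K => by
        apply Subtype.ext; funext b; rfl
      right_inv := fun h => by
        apply Subtype.ext; funext q
        induction q using Quotient.ind with
        | _ z =>
          rcases z with a | (a | a)
          exacts [(h.2 (Sum.inl a)).symm, rfl, (h.2 (Sum.inr a)).symm] }
    have e2 : {h : Quotient σ → Fin t // ∀ x : Fin l ⊕ Fin n, h (Quotient.mk σ (ι x)) = g x}
        ≃ ((Sᶜ : Set (Quotient σ)) → Fin t) :=
    { toFun := fun h s => h.1 s.1
      invFun := fun f => ⟨fun q => if hq : q ∈ S then g hq.choose else f ⟨q, hq⟩, by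
        intro x
        have hmem : (Quotient.mk σ (ι x)) ∈ S := ⟨x, rfl⟩
        simp only [dif_pos hmem]
        exact hc _ _ (Quotient.exact hmem.choose_spec)⟩
      left_inv := fun h => by
        apply Subtype.ext; funext q
        by_cases hq : q ∈ S
        · simp only [dif_pos hq]
          exact (h.2 hq.choose).symm.trans (congrArg h.1 hq.choose_spec)
        · simp only [dif_neg hq]
      right_inv := fun f => by
        funext s
        simp only [dif_neg s.2] }
    set mid : Set (Fin l ⊕ (Fin m ⊕ Fin n)) :=
      Set.range fun x : Fin m => (Sum.inr (Sum.inl x) : Fin l ⊕ (Fin m ⊕ Fin n)) with hmid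
    have hφmem : ∀ q : (Sᶜ : Set (Quotient σ)),
        {x | Quotient.mk σ x = q.1} ∈ σ.classes ∧ {x | Quotient.mk σ x = q.1} ⊆ mid := by
      intro q
      constructor
      · refine ⟨q.1.out, ?_⟩
        ext z
        simp only [Set.mem_setOf_eq]
        constructor
        · intro h; exact Quotient.exact (h.trans (Quotient.out_eq _).symm)
        · intro h; exact (Quotient.sound h).trans (Quotient.out_eq _)
      · intro z hz
        rcases z with a | (a | a)
        · exact absurd hz (fun h => q.2 ⟨Sum.inl a, h⟩)
        · exact ⟨a, rfl⟩
        · exact absurd hz (fun h => q.2 ⟨Sum.inr a, h⟩)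
    have e3 : ((Sᶜ : Set (Quotient σ)))
        ≃ {B : Set (Fin l ⊕ (Fin m ⊕ Fin n)) // B ∈ σ.classes ∧ B ⊆ mid} := by
      refine Equiv.ofBijective (fun q => ⟨{x | Quotient.mk σ x = q.1}, hφmem q⟩) ⟨?_, ?_⟩
      · intro q q' hqq'
        have heq : {x | Quotient.mk σ x = q.1} = {x | Quotient.mk σ x = q'.1} :=
          congrArg Subtype.val hqq'
        have h1 : (q.1 : Quotient σ).out ∈ {x | Quotient.mk σ x = q.1} := Quotient.out_eq _
        rw [heq] at h1
        apply Subtype.ext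
        rw [← h1]
        exact (Quotient.out_eq _).symm
      · rintro ⟨B, hB, hsub⟩
        obtain ⟨y, rfl⟩ := hB
        have hq : (Quotient.mk σ y) ∈ Sᶜ := by
          rintro ⟨x, hx⟩
          have hrel : σ.r (ι x) y := Quotient.exact hx
          obtain ⟨b, hb⟩ := hsub hrel
          rcases x with a | a <;> simp [hι] at hb
        refine ⟨⟨Quotient.mk σ y, hq⟩, ?_⟩
        apply Subtype.ext
        ext z
        simp only [Set.mem_setOf_eq]
        exact ⟨fun h => Quotient.exact h, fun h => Quotient.sound h⟩
    rw [Nat.card_congr (e1.trans e2), Nat.card_fun, Nat.card_eq_fintype_card, Fintype.card_fin]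
    congr 1
    rw [← Nat.card_coe_set_eq]
    exact Nat.card_congr e3
  · rw [Nat.card_eq_zero]
    left
    constructor
    rintro ⟨K, hK⟩
    apply hc
    intro x y hxy
    have := hK _ _ hxy
    rwa [hFι, hFι] at this

end AuxLemmas

/-- `T_π ∘ T_ρ = t^c • T_{π∘ρ}`: the composition rule in the partition category. -/
theorem stmt1 (k : Type*) [Field k] [CharZero k] (t l m n : ℕ)
    (π : Setoid (Fin l ⊕ Fin m)) (ρ : Setoid (Fin m ⊕ Fin n)) :
    (partitionMap k t l m π).comp (partitionMap k t m n ρ)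
      = (t : k) ^ middleBlocks l m n π ρ • partitionMap k t l n (compSetoid l m n π ρ) := by
  have hcard : ∀ (J : Fin l → Fin t) (I : Fin n → Fin t),
      (Finset.univ.filter (fun K : Fin m → Fin t =>
        (∀ x y, π.r x y → Sum.elim J K x = Sum.elim J K y) ∧
        (∀ x y, ρ.r x y → Sum.elim K I x = Sum.elim K I y))).card
      = if (∀ x y, (compSetoid l m n π ρ).r x y → Sum.elim J I x = Sum.elim J I y)
        then t ^ middleBlocks l m n π ρ else 0 := by
    intro J I
    rw [← Fintype.card_subtype, ← Nat.card_eq_fintype_card,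
      Nat.card_congr (Equiv.subtypeEquivRight (fun K => respects_iff π ρ J K I))]
    exact key_count (joinSetoid l m n π ρ) J I
  rw [partitionMap, partitionMap, partitionMap, ← Matrix.mulVecLin_mul]
  have hM : (Matrix.of fun (J : Fin l → Fin t) (K : Fin m → Fin t) =>
        if ∀ x y : Fin l ⊕ Fin m, π.r x y → Sum.elim J K x = Sum.elim J K y then (1:k) else 0) *
      (Matrix.of fun (K : Fin m → Fin t) (I : Fin n → Fin t) =>
        if ∀ x y : Fin m ⊕ Fin n, ρ.r x y → Sum.elim K I x = Sum.elim K I y then (1:k) else 0)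
      = (t : k) ^ middleBlocks l m n π ρ •
        (Matrix.of fun (J : Fin l → Fin t) (I : Fin n → Fin t) =>
        if ∀ x y : Fin l ⊕ Fin n, (compSetoid l m n π ρ).r x y → Sum.elim J I x = Sum.elim J I y
          then (1:k) else 0) := by
    ext J I
    rw [Matrix.mul_apply]
    simp only [Matrix.of_apply, ite_mul, one_mul, zero_mul, ← ite_and]
    rw [Finset.sum_boole, hcard J I, Matrix.smul_apply, Matrix.of_apply, smul_eq_mul]
    split_ifs <;> push_cast <;> ring
  rw [hM]
  apply LinearMap.ext
  intro v
  simp only [Matrix.mulVecLin_apply, LinearMap.smul_apply, Pi.smul_apply]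
  exact Matrix.smul_mulVec _ _ _
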